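/- Let (Ω, μ) and (Ω', μ') be probability spaces, let 𝒳 and 𝒴 be finite types with measurable singletons satisfying 2 ≤ card 𝒳 and 2 ≤ card 𝒴, and let X : Ω → 𝒳, Y : Ω → 𝒴, X' : Ω' → 𝒳, Y' : Ω' → 𝒴 be measurable random variables. Set δ := ∑_{(x,y) ∈ 𝒳 × 𝒴} |μ {ω | X ω = x ∧ Y ω = y}.toReal − μ' {ω | X' ω = x ∧ Y' ω = y}.toReal| and assume 0 < δ ≤ 1/2. Then |I[X : Y ; μ] − I[X' : Y' ; μ']| ≤ 3 · δ · log((card 𝒳 · card 𝒴) / δ). -/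

import Mathlib

open MeasureTheory ProbabilityTheory Real

section Aux
open Real MeasureTheory

-- Lemma C: η(1-t) ≤ η(t) for t ∈ [0,1/2]
lemma negMulLog_one_sub_le {t : ℝ} (ht : 0 ≤ t) (ht2 : t ≤ 1/2) :
    negMulLog (1 - t) ≤ negMulLog t := by
  set φ : ℝ → ℝ := fun s => negMulLog s - negMulLog (1 - s) with hφ
  have hderiv : ∀ s ∈ Set.Ioo (0:ℝ) (1/2), HasDerivAt φ (-log s - log (1 - s) - 2) s := by
    intro s hs
    have h1 : HasDerivAt negMulLog (-log s - 1) s := hasDerivAt_negMulLog (ne_of_gt hs.1)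
    have h2 : HasDerivAt (fun u : ℝ => 1 - u) (-1) s := by
      simpa using (hasDerivAt_id s).const_sub 1
    have h3 : HasDerivAt (fun u : ℝ => negMulLog (1 - u)) ((-log (1-s) - 1) * (-1)) s :=
      (hasDerivAt_negMulLog (by intro h; rw [sub_eq_zero] at h; linarith [hs.2])).comp s h2
    have := h1.sub h3
    rw [show -log s - log (1 - s) - 2 = -log s - 1 - (-log (1 - s) - 1) * -1 by ring]
    exact this
  have hconc : ConcaveOn ℝ (Set.Icc (0:ℝ) (1/2)) φ := by
    apply AntitoneOn.concaveOn_of_deriv (convex_Icc _ _)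
    · exact (continuous_negMulLog.sub (continuous_negMulLog.comp (continuous_const.sub continuous_id))).continuousOn
    · rw [interior_Icc]
      intro s hs
      exact ((hderiv s hs).differentiableAt).differentiableWithinAt
    · rw [interior_Icc]
      intro a ha b hb hab
      rw [(hderiv a ha).deriv, (hderiv b hb).deriv]
      have h1 : a * (1 - a) ≤ b * (1 - b) := by nlinarith [ha.1, hb.2]
      have h2 : (0:ℝ) < a * (1 - a) := by nlinarith [ha.1, ha.2]
      have := Real.log_le_log h2 h1
      rw [Real.log_mul (ne_of_gt ha.1) (by nlinarith [ha.2]), Real.log_mul (ne_of_gt hb.1) (by nlinarith [hb.2])] at this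
      linarith
  have h0 : φ 0 = 0 := by simp [hφ]
  have hhalf : φ (1/2) = 0 := by norm_num [hφ]
  have key : 0 ≤ φ t := by
    have hm0 : (0:ℝ) ∈ Set.Icc (0:ℝ) (1/2) := Set.mem_Icc.mpr ⟨le_refl 0, by norm_num⟩
    have hmh : (1/2:ℝ) ∈ Set.Icc (0:ℝ) (1/2) := Set.mem_Icc.mpr ⟨by norm_num, le_refl _⟩
    have ha : (0:ℝ) ≤ 1 - 2*t := by linarith
    have hb : (0:ℝ) ≤ 2*t := by linarith
    have hab : (1 - 2*t) + 2*t = 1 := by ring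
    have h := hconc.2 hm0 hmh ha hb hab
    simp only [smul_eq_mul, mul_zero, add_zero, zero_add, h0, hhalf] at h
    have ht' : 2 * t * 2⁻¹ = t := by ring
    simpa [smul_eq_mul, ht'] using h
  simpa [hφ] using key

-- Lemma A: η(y+t) - η(y) ≤ η(t)
lemma negMulLog_add_sub_le {y t : ℝ} (hy : 0 ≤ y) (ht : 0 ≤ t) (h1 : y + t ≤ 1) :
    negMulLog (y + t) - negMulLog y ≤ negMulLog t := by
  have hyt : (0:ℝ) ≤ y + t := by linarith
  have h2 : - y * log (y + t) ≤ - y * log y := by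
    rcases eq_or_lt_of_le hy with h | h
    · simp [← h]
    · have := Real.log_le_log h (by linarith : y ≤ y + t)
      nlinarith
  have h3 : - t * log (y + t) ≤ - t * log t := by
    rcases eq_or_lt_of_le ht with h | h
    · simp [← h]
    · have := Real.log_le_log h (by linarith : t ≤ y + t)
      nlinarith
  simp only [negMulLog]
  nlinarith [h2, h3]

-- Lemma B: η(y) - η(y+t) ≤ η(t) for t ≤ 1/2
lemma negMulLog_sub_add_le {y t : ℝ} (hy : 0 ≤ y) (ht : 0 ≤ t) (ht2 : t ≤ 1/2)
    (h1 : y + t ≤ 1) : negMulLog y - negMulLog (y + t) ≤ negMulLog t := by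
  rcases eq_or_lt_of_le ht with h | htpos
  · simp [← h]
  set g : ℝ → ℝ := fun u => negMulLog u - negMulLog (u + t) with hg
  have hderiv : ∀ u ∈ Set.Ioo (0:ℝ) (1 - t), HasDerivAt g (log (u + t) - log u) u := by
    intro u hu
    have h1' : HasDerivAt negMulLog (-log u - 1) u := hasDerivAt_negMulLog (ne_of_gt hu.1)
    have h2' : HasDerivAt (fun v : ℝ => negMulLog (v + t)) (-log (u + t) - 1) u := by
      have hb : HasDerivAt (fun v : ℝ => v + t) 1 u := (hasDerivAt_id u).add_const t
      have := (hasDerivAt_negMulLog (x := u + t) (ne_of_gt (by linarith [hu.1] : (0:ℝ) < u + t))).comp u hb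
      simpa [Function.comp_def] using this
    have := h1'.sub h2'
    rw [show log (u + t) - log u = -log u - 1 - (-log (u + t) - 1) by ring]
    exact this
  have hmono : MonotoneOn g (Set.Icc 0 (1 - t)) := by
    apply monotoneOn_of_deriv_nonneg (convex_Icc _ _)
    · exact (continuous_negMulLog.sub (continuous_negMulLog.comp (continuous_id.add continuous_const))).continuousOn
    · rw [interior_Icc]
      exact fun u hu => ((hderiv u hu).differentiableAt).differentiableWithinAt
    · rw [interior_Icc]
      intro u hu
      rw [(hderiv u hu).deriv]
      have := Real.log_le_log hu.1 (by linarith : u ≤ u + t)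
      linarith
  have hyIcc : y ∈ Set.Icc (0:ℝ) (1 - t) := ⟨hy, by linarith⟩
  have hend : (1 - t) ∈ Set.Icc (0:ℝ) (1 - t) := ⟨by linarith, le_refl _⟩
  have := hmono hyIcc hend (by linarith)
  have hgend : g (1 - t) = negMulLog (1 - t) := by simp [hg]
  calc negMulLog y - negMulLog (y + t) = g y := rfl
    _ ≤ g (1 - t) := this
    _ = negMulLog (1 - t) := hgend
    _ ≤ negMulLog t := negMulLog_one_sub_le ht ht2

-- combined pointwise lemma
lemma abs_negMulLog_sub_negMulLog {x y : ℝ} (hx : 0 ≤ x) (hx1 : x ≤ 1) (hy : 0 ≤ y)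
    (hy1 : y ≤ 1) (h : |x - y| ≤ 1/2) :
    |negMulLog x - negMulLog y| ≤ negMulLog |x - y| := by
  rcases le_total y x with hle | hle
  · have habs : |x - y| = x - y := abs_of_nonneg (by linarith)
    rw [habs, abs_le]
    constructor
    · have := negMulLog_sub_add_le hy (by linarith : (0:ℝ) ≤ x - y) (by linarith [habs ▸ h])
        (by linarith : y + (x - y) ≤ 1)
      simp only [add_sub_cancel] at this
      linarith
    · have := negMulLog_add_sub_le hy (by linarith : (0:ℝ) ≤ x - y) (by linarith : y + (x - y) ≤ 1)
      simp only [add_sub_cancel] at this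
      linarith
  · have habs : |x - y| = y - x := abs_of_nonpos (by linarith) |>.trans (by ring)
    rw [habs, abs_le]
    constructor
    · have := negMulLog_add_sub_le hx (by linarith : (0:ℝ) ≤ y - x) (by linarith : x + (y - x) ≤ 1)
      simp only [add_sub_cancel] at this
      linarith
    · have := negMulLog_sub_add_le hx (by linarith : (0:ℝ) ≤ y - x) (by linarith [habs ▸ h])
        (by linarith : x + (y - x) ≤ 1)
      simp only [add_sub_cancel] at this
      linarith

-- monotonicity of η on [0, e⁻¹]
lemma negMulLog_monotoneOn : MonotoneOn negMulLog (Set.Icc (0:ℝ) (Real.exp (-1))) := by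
  apply monotoneOn_of_deriv_nonneg (convex_Icc _ _) continuous_negMulLog.continuousOn
  · rw [interior_Icc]
    exact fun u hu => (differentiableAt_negMulLog (ne_of_gt hu.1)).differentiableWithinAt
  · rw [interior_Icc]
    intro u hu
    rw [deriv_negMulLog (ne_of_gt hu.1)]
    have : log u ≤ log (Real.exp (-1)) := Real.log_le_log hu.1 hu.2.le
    rw [Real.log_exp] at this
    linarith

-- Jensen: ∑ η(t i) ≤ n * η((∑ t)/n)
lemma sum_negMulLog_le_card {ι : Type*} [Fintype ι] [Nonempty ι] (t : ι → ℝ)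
    (ht : ∀ i, 0 ≤ t i) :
    ∑ i, negMulLog (t i) ≤ (Fintype.card ι : ℝ) * negMulLog ((∑ i, t i) / Fintype.card ι) := by
  have hn : (0:ℝ) < Fintype.card ι := by
    exact_mod_cast Fintype.card_pos
  have hw : ∀ i ∈ Finset.univ (α := ι), (0:ℝ) ≤ (Fintype.card ι : ℝ)⁻¹ := fun _ _ => by positivity
  have hw1 : ∑ _i : ι, (Fintype.card ι : ℝ)⁻¹ = 1 := by
    rw [Finset.sum_const, Finset.card_univ, nsmul_eq_mul]
    field_simp
  have hmem : ∀ i ∈ Finset.univ (α := ι), t i ∈ Set.Ici (0:ℝ) := fun i _ => ht i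
  have := concaveOn_negMulLog.le_map_sum hw hw1 hmem
  simp only [smul_eq_mul] at this
  rw [← Finset.mul_sum, ← Finset.mul_sum] at this
  have h2 : (∑ i, t i) / (Fintype.card ι : ℝ) = (Fintype.card ι : ℝ)⁻¹ * ∑ i, t i := by
    field_simp
  rw [h2]
  calc ∑ i, negMulLog (t i) = (Fintype.card ι : ℝ) * ((Fintype.card ι : ℝ)⁻¹ * ∑ i, negMulLog (t i)) := by
        field_simp
    _ ≤ (Fintype.card ι : ℝ) * negMulLog ((Fintype.card ι : ℝ)⁻¹ * ∑ i, t i) := by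
        exact mul_le_mul_of_nonneg_left this hn.le

lemma quarter_le_exp_neg_one : (1/4 : ℝ) ≤ Real.exp (-1) := by
  rw [Real.exp_neg]
  rw [le_inv_comm₀ (by norm_num) (Real.exp_pos 1)]
  calc Real.exp 1 ≤ 2.7182818286 := Real.exp_one_lt_d9.le
    _ ≤ (1/4 : ℝ)⁻¹ := by norm_num

lemma card_negMulLog_mono {n a b : ℝ} (hn : 2 ≤ n) (ha : 0 ≤ a) (hab : a ≤ b)
    (hb : b ≤ 1/2) : n * negMulLog (a / n) ≤ n * negMulLog (b / n) := by
  have hn0 : (0:ℝ) < n := by linarith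
  apply mul_le_mul_of_nonneg_left _ hn0.le
  apply negMulLog_monotoneOn
  · exact ⟨by positivity, le_trans (by rw [div_le_div_iff₀ hn0 (by norm_num)]; nlinarith)
      quarter_le_exp_neg_one⟩
  · exact ⟨div_nonneg (ha.trans hab) hn0.le, le_trans (by rw [div_le_div_iff₀ hn0 (by norm_num)]; nlinarith)
      quarter_le_exp_neg_one⟩
  · gcongr

lemma card_negMulLog_eq {n b : ℝ} (hn : 0 < n) (hb : 0 < b) :
    n * negMulLog (b / n) = b * Real.log (n / b) := by
  rw [negMulLog, Real.log_div (ne_of_gt hb) (ne_of_gt hn), Real.log_div (ne_of_gt hn) (ne_of_gt hb)]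
  field_simp
  ring

-- key entropy difference bound
lemma abs_sum_negMulLog_sub_le {ι : Type*} [Fintype ι] [Nonempty ι] (f g : ι → ℝ)
    (hf0 : ∀ i, 0 ≤ f i) (hf1 : ∀ i, f i ≤ 1) (hg0 : ∀ i, 0 ≤ g i) (hg1 : ∀ i, g i ≤ 1)
    (hhalf : ∀ i, |f i - g i| ≤ 1/2) :
    |∑ i, negMulLog (f i) - ∑ i, negMulLog (g i)| ≤
      (Fintype.card ι : ℝ) * negMulLog ((∑ i, |f i - g i|) / Fintype.card ι) := by
  rw [← Finset.sum_sub_distrib]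
  calc |∑ i, (negMulLog (f i) - negMulLog (g i))| ≤ ∑ i, |negMulLog (f i) - negMulLog (g i)| :=
        Finset.abs_sum_le_sum_abs _ _
    _ ≤ ∑ i, negMulLog |f i - g i| := Finset.sum_le_sum fun i _ =>
        abs_negMulLog_sub_negMulLog (hf0 i) (hf1 i) (hg0 i) (hg1 i) (hhalf i)
    _ ≤ (Fintype.card ι : ℝ) * negMulLog ((∑ i, |f i - g i|) / Fintype.card ι) :=
        sum_negMulLog_le_card _ fun i => abs_nonneg _

open MeasureTheory in
lemma map_fst_toReal_eq {Ω 𝒳 𝒴 : Type*} [MeasurableSpace Ω] [MeasurableSpace 𝒳]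
    [MeasurableSpace 𝒴] [Fintype 𝒴] [MeasurableSingletonClass 𝒳] [MeasurableSingletonClass 𝒴]
    (μ : Measure Ω) [IsProbabilityMeasure μ] (X : Ω → 𝒳) (Y : Ω → 𝒴)
    (hX : Measurable X) (hY : Measurable Y) (x : 𝒳) :
    ((μ.map X) {x}).toReal = ∑ y : 𝒴, ((μ.map (fun ω => (X ω, Y ω))) {(x, y)}).toReal := by
  have hpair : Measurable (fun ω => (X ω, Y ω)) := hX.prodMk hY
  rw [Measure.map_apply hX (measurableSet_singleton x)]
  have hset : X ⁻¹' {x} = ⋃ y ∈ (Finset.univ : Finset 𝒴), (fun ω => (X ω, Y ω)) ⁻¹' {(x, y)} := by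
    ext ω
    simp only [Set.mem_preimage, Set.mem_singleton_iff, Set.mem_iUnion, Finset.mem_univ,
      Prod.mk.injEq, exists_prop, true_and]
    constructor
    · intro h; exact ⟨Y ω, h, rfl⟩
    · rintro ⟨y, h, -⟩; exact h
  have hdisj : (↑(Finset.univ : Finset 𝒴) : Set 𝒴).PairwiseDisjoint
      (fun y => (fun ω => (X ω, Y ω)) ⁻¹' {(x, y)}) := by
    intro a _ b _ hab
    rw [Function.onFun, Set.disjoint_left]
    rintro ω h1 h2
    simp only [Set.mem_preimage, Set.mem_singleton_iff, Prod.mk.injEq] at h1 h2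
    exact hab (h1.2.symm.trans h2.2)
  rw [hset, measure_biUnion_finset hdisj (fun y _ => hpair (measurableSet_singleton _))]
  rw [ENNReal.toReal_sum (fun y _ => measure_ne_top _ _)]
  exact Finset.sum_congr rfl fun y _ => by
    rw [Measure.map_apply hpair (measurableSet_singleton _)]

open MeasureTheory in
lemma map_snd_toReal_eq {Ω 𝒳 𝒴 : Type*} [MeasurableSpace Ω] [MeasurableSpace 𝒳]
    [MeasurableSpace 𝒴] [Fintype 𝒳] [MeasurableSingletonClass 𝒳] [MeasurableSingletonClass 𝒴]
    (μ : Measure Ω) [IsProbabilityMeasure μ] (X : Ω → 𝒳) (Y : Ω → 𝒴)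
    (hX : Measurable X) (hY : Measurable Y) (y : 𝒴) :
    ((μ.map Y) {y}).toReal = ∑ x : 𝒳, ((μ.map (fun ω => (X ω, Y ω))) {(x, y)}).toReal := by
  have hpair : Measurable (fun ω => (X ω, Y ω)) := hX.prodMk hY
  rw [Measure.map_apply hY (measurableSet_singleton y)]
  have hset : Y ⁻¹' {y} = ⋃ x ∈ (Finset.univ : Finset 𝒳), (fun ω => (X ω, Y ω)) ⁻¹' {(x, y)} := by
    ext ω
    simp only [Set.mem_preimage, Set.mem_singleton_iff, Set.mem_iUnion, Finset.mem_univ,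
      Prod.mk.injEq, exists_prop, true_and]
    constructor
    · intro h; exact ⟨X ω, rfl, h⟩
    · rintro ⟨x, -, h⟩; exact h
  have hdisj : (↑(Finset.univ : Finset 𝒳) : Set 𝒳).PairwiseDisjoint
      (fun x => (fun ω => (X ω, Y ω)) ⁻¹' {(x, y)}) := by
    intro a _ b _ hab
    rw [Function.onFun, Set.disjoint_left]
    rintro ω h1 h2
    simp only [Set.mem_preimage, Set.mem_singleton_iff, Prod.mk.injEq] at h1 h2
    exact hab (h1.1.symm.trans h2.1)
  rw [hset, measure_biUnion_finset hdisj (fun x _ => hpair (measurableSet_singleton _))]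
  rw [ENNReal.toReal_sum (fun x _ => measure_ne_top _ _)]
  exact Finset.sum_congr rfl fun x _ => by
    rw [Measure.map_apply hpair (measurableSet_singleton _)]

open MeasureTheory in
lemma toReal_prob_le_one {α : Type*} [MeasurableSpace α] (ν : Measure α)
    [IsProbabilityMeasure ν] (s : Set α) : (ν s).toReal ≤ 1 := by
  calc (ν s).toReal ≤ (ν Set.univ).toReal :=
        ENNReal.toReal_mono (measure_ne_top _ _) (measure_mono (Set.subset_univ _))
    _ = 1 := by simp

open MeasureTheory

end Aux

namespace WiretapEquiv

variable {Ω : Type*} [MeasurableSpace Ω]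

/-- Shannon entropy (with natural logarithm) of a measure on a finite type,
as in Mathlib's `ProbabilityTheory.measureEntropy` specialized to finite types. -/
noncomputable def measureEntropy {α : Type*} [MeasurableSpace α] [Fintype α]
    (μ : Measure α) : ℝ :=
  ∑ a : α, Real.negMulLog (μ {a}).toReal

/-- Shannon entropy `H[X]` of a random variable. -/
noncomputable def entropy {α : Type*} [MeasurableSpace α] [Fintype α]
    (X : Ω → α) (μ : Measure Ω) : ℝ :=
  measureEntropy (μ.map X)

/-- Conditional entropy `H[X | Y] = H[⟨X, Y⟩] - H[Y]`. -/
noncomputable def condEntropy {α β : Type*} [MeasurableSpace α] [Fintype α]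
    [MeasurableSpace β] [Fintype β] (X : Ω → α) (Y : Ω → β) (μ : Measure Ω) : ℝ :=
  entropy (fun ω => (X ω, Y ω)) μ - entropy Y μ

/-- Mutual information `I[X : Y] = H[X] + H[Y] - H[⟨X, Y⟩]`. -/
noncomputable def mutualInfo {α β : Type*} [MeasurableSpace α] [Fintype α]
    [MeasurableSpace β] [Fintype β] (X : Ω → α) (Y : Ω → β) (μ : Measure Ω) : ℝ :=
  entropy X μ + entropy Y μ - entropy (fun ω => (X ω, Y ω)) μ

lemma measureEntropy_diff_le {α : Type*} [MeasurableSpace α] [Fintype α] [Nonempty α]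
    (ν ν' : Measure α) [IsProbabilityMeasure ν] [IsProbabilityMeasure ν'] {δ : ℝ}
    (hδpos : 0 < δ) (hδhalf : δ ≤ 1/2)
    (h : ∑ a : α, |(ν {a}).toReal - (ν' {a}).toReal| ≤ δ)
    (hn : 2 ≤ (Fintype.card α : ℝ)) :
    |measureEntropy ν - measureEntropy ν'| ≤ δ * Real.log ((Fintype.card α : ℝ) / δ) := by
  have hsum_nonneg : ∀ a : α, (0:ℝ) ≤ |(ν {a}).toReal - (ν' {a}).toReal| := fun a => abs_nonneg _
  have hhalf : ∀ a : α, |(ν {a}).toReal - (ν' {a}).toReal| ≤ 1/2 := by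
    intro a
    refine le_trans (le_trans ?_ h) hδhalf
    exact Finset.single_le_sum (fun i _ => hsum_nonneg i) (Finset.mem_univ a)
  have h1 : |measureEntropy ν - measureEntropy ν'| ≤
      (Fintype.card α : ℝ) * negMulLog ((∑ a : α, |(ν {a}).toReal - (ν' {a}).toReal|) / Fintype.card α) :=
    abs_sum_negMulLog_sub_le _ _ (fun a => ENNReal.toReal_nonneg) (fun a => toReal_prob_le_one ν _)
      (fun a => ENNReal.toReal_nonneg) (fun a => toReal_prob_le_one ν' _) hhalf
  have h2 : (Fintype.card α : ℝ) * negMulLog ((∑ a : α, |(ν {a}).toReal - (ν' {a}).toReal|) / Fintype.card α)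
      ≤ (Fintype.card α : ℝ) * negMulLog (δ / Fintype.card α) :=
    card_negMulLog_mono hn (Finset.sum_nonneg fun a _ => hsum_nonneg a) h hδhalf
  have h3 : (Fintype.card α : ℝ) * negMulLog (δ / Fintype.card α) = δ * Real.log ((Fintype.card α : ℝ) / δ) :=
    card_negMulLog_eq (by linarith) hδpos
  linarith

/-- Continuity of mutual information. If the joint distributions of
`(X, Y)` under `μ` and of `(X', Y')` under `μ'` are at `ℓ¹` distance `δ` with
`0 < δ ≤ 1/2`, and `card 𝒳, card 𝒴 ≥ 2`, then
`|I[X : Y ; μ] − I[X' : Y' ; μ']| ≤ 3 δ log (card 𝒳 · card 𝒴 / δ)`. -/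
theorem mutualInfo_continuity
    {Ω' : Type*} [MeasurableSpace Ω']
    {𝒳 𝒴 : Type*}
    [MeasurableSpace 𝒳] [Fintype 𝒳] [MeasurableSingletonClass 𝒳]
    [MeasurableSpace 𝒴] [Fintype 𝒴] [MeasurableSingletonClass 𝒴]
    (hcard𝒳 : 2 ≤ Fintype.card 𝒳) (hcard𝒴 : 2 ≤ Fintype.card 𝒴)
    (μ : Measure Ω) [IsProbabilityMeasure μ]
    (μ' : Measure Ω') [IsProbabilityMeasure μ']
    (X : Ω → 𝒳) (Y : Ω → 𝒴) (X' : Ω' → 𝒳) (Y' : Ω' → 𝒴)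
    (hX : Measurable X) (hY : Measurable Y) (hX' : Measurable X') (hY' : Measurable Y')
    (δ : ℝ)
    (hδdef : δ = ∑ p : 𝒳 × 𝒴,
      |(μ {ω | X ω = p.1 ∧ Y ω = p.2}).toReal - (μ' {ω | X' ω = p.1 ∧ Y' ω = p.2}).toReal|)
    (hδpos : 0 < δ) (hδhalf : δ ≤ 1 / 2) :
    |mutualInfo X Y μ - mutualInfo X' Y' μ'| ≤
      3 * δ * Real.log ((Fintype.card 𝒳 * Fintype.card 𝒴 : ℝ) / δ) := by
  haveI h𝒳ne : Nonempty 𝒳 := Fintype.card_pos_iff.mp (by omega)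
  haveI h𝒴ne : Nonempty 𝒴 := Fintype.card_pos_iff.mp (by omega)
  have hpair : Measurable (fun ω => (X ω, Y ω)) := hX.prodMk hY
  have hpair' : Measurable (fun ω => (X' ω, Y' ω)) := hX'.prodMk hY'
  haveI : IsProbabilityMeasure (μ.map (fun ω => (X ω, Y ω))) :=
    Measure.isProbabilityMeasure_map hpair.aemeasurable
  haveI : IsProbabilityMeasure (μ'.map (fun ω => (X' ω, Y' ω))) :=
    Measure.isProbabilityMeasure_map hpair'.aemeasurable
  haveI : IsProbabilityMeasure (μ.map X) := Measure.isProbabilityMeasure_map hX.aemeasurable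
  haveI : IsProbabilityMeasure (μ.map Y) := Measure.isProbabilityMeasure_map hY.aemeasurable
  haveI : IsProbabilityMeasure (μ'.map X') := Measure.isProbabilityMeasure_map hX'.aemeasurable
  haveI : IsProbabilityMeasure (μ'.map Y') := Measure.isProbabilityMeasure_map hY'.aemeasurable
  have hc𝒳 : (2:ℝ) ≤ (Fintype.card 𝒳 : ℝ) := by exact_mod_cast hcard𝒳
  have hc𝒴 : (2:ℝ) ≤ (Fintype.card 𝒴 : ℝ) := by exact_mod_cast hcard𝒴
  -- identify δ with the map-measure sum
  have hδ : ∑ q : 𝒳 × 𝒴, |((μ.map (fun ω => (X ω, Y ω))) {q}).toReal -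
      ((μ'.map (fun ω => (X' ω, Y' ω))) {q}).toReal| = δ := by
    rw [hδdef]
    refine Finset.sum_congr rfl fun q _ => ?_
    have hs1 : (fun ω => (X ω, Y ω)) ⁻¹' {q} = {ω | X ω = q.1 ∧ Y ω = q.2} := by
      ext ω; simp [Prod.ext_iff]
    have hs2 : (fun ω => (X' ω, Y' ω)) ⁻¹' {q} = {ω | X' ω = q.1 ∧ Y' ω = q.2} := by
      ext ω; simp [Prod.ext_iff]
    rw [Measure.map_apply hpair (measurableSet_singleton q),
      Measure.map_apply hpair' (measurableSet_singleton q), hs1, hs2]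
  -- cast of the product cardinality
  have hcast : ((Fintype.card (𝒳 × 𝒴)) : ℝ) = (Fintype.card 𝒳 : ℝ) * (Fintype.card 𝒴 : ℝ) := by
    rw [Fintype.card_prod]; push_cast; ring
  set L : ℝ := Real.log ((Fintype.card 𝒳 : ℝ) * (Fintype.card 𝒴 : ℝ) / δ) with hL
  -- joint entropy bound
  have hJ : |measureEntropy (μ.map (fun ω => (X ω, Y ω))) -
      measureEntropy (μ'.map (fun ω => (X' ω, Y' ω)))| ≤ δ * L := by
    have := measureEntropy_diff_le (μ.map (fun ω => (X ω, Y ω)))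
      (μ'.map (fun ω => (X' ω, Y' ω))) hδpos hδhalf (le_of_eq hδ)
      (by rw [hcast]; nlinarith)
    rwa [hcast] at this
  -- marginal X bound
  have hsumX : ∑ x : 𝒳, |((μ.map X) {x}).toReal - ((μ'.map X') {x}).toReal| ≤ δ := by
    calc ∑ x : 𝒳, |((μ.map X) {x}).toReal - ((μ'.map X') {x}).toReal|
        ≤ ∑ x : 𝒳, ∑ y : 𝒴, |((μ.map (fun ω => (X ω, Y ω))) {(x, y)}).toReal -
            ((μ'.map (fun ω => (X' ω, Y' ω))) {(x, y)}).toReal| := by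
          refine Finset.sum_le_sum fun x _ => ?_
          rw [map_fst_toReal_eq μ X Y hX hY x, map_fst_toReal_eq μ' X' Y' hX' hY' x,
            ← Finset.sum_sub_distrib]
          exact Finset.abs_sum_le_sum_abs _ _
      _ = δ := by rw [← hδ, Fintype.sum_prod_type]
  have hsumY : ∑ y : 𝒴, |((μ.map Y) {y}).toReal - ((μ'.map Y') {y}).toReal| ≤ δ := by
    calc ∑ y : 𝒴, |((μ.map Y) {y}).toReal - ((μ'.map Y') {y}).toReal|
        ≤ ∑ y : 𝒴, ∑ x : 𝒳, |((μ.map (fun ω => (X ω, Y ω))) {(x, y)}).toReal -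
            ((μ'.map (fun ω => (X' ω, Y' ω))) {(x, y)}).toReal| := by
          refine Finset.sum_le_sum fun y _ => ?_
          rw [map_snd_toReal_eq μ X Y hX hY y, map_snd_toReal_eq μ' X' Y' hX' hY' y,
            ← Finset.sum_sub_distrib]
          exact Finset.abs_sum_le_sum_abs _ _
      _ = δ := by rw [← hδ, Fintype.sum_prod_type_right]
  -- log monotonicity to lift marginal bounds to L
  have hlog𝒳 : Real.log ((Fintype.card 𝒳 : ℝ) / δ) ≤ L := by
    rw [hL]
    apply Real.log_le_log (by positivity)
    gcongr
    nlinarith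
  have hlog𝒴 : Real.log ((Fintype.card 𝒴 : ℝ) / δ) ≤ L := by
    rw [hL]
    apply Real.log_le_log (by positivity)
    gcongr
    nlinarith
  have hMX : |measureEntropy (μ.map X) - measureEntropy (μ'.map X')| ≤ δ * L := by
    have := measureEntropy_diff_le (μ.map X) (μ'.map X') hδpos hδhalf hsumX hc𝒳
    calc |measureEntropy (μ.map X) - measureEntropy (μ'.map X')|
        ≤ δ * Real.log ((Fintype.card 𝒳 : ℝ) / δ) := this
      _ ≤ δ * L := mul_le_mul_of_nonneg_left hlog𝒳 hδpos.le
  have hMY : |measureEntropy (μ.map Y) - measureEntropy (μ'.map Y')| ≤ δ * L := by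
    have := measureEntropy_diff_le (μ.map Y) (μ'.map Y') hδpos hδhalf hsumY hc𝒴
    calc |measureEntropy (μ.map Y) - measureEntropy (μ'.map Y')|
        ≤ δ * Real.log ((Fintype.card 𝒴 : ℝ) / δ) := this
      _ ≤ δ * L := mul_le_mul_of_nonneg_left hlog𝒴 hδpos.le
  -- combine
  have hsplit : mutualInfo X Y μ - mutualInfo X' Y' μ' =
      (measureEntropy (μ.map X) - measureEntropy (μ'.map X')) +
      (measureEntropy (μ.map Y) - measureEntropy (μ'.map Y')) -
      (measureEntropy (μ.map (fun ω => (X ω, Y ω))) -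
        measureEntropy (μ'.map (fun ω => (X' ω, Y' ω)))) := by
    simp only [mutualInfo, entropy]
    ring
  have hRHS : 3 * δ * Real.log ((Fintype.card 𝒳 * Fintype.card 𝒴 : ℝ) / δ) = δ * L + δ * L + δ * L := by
    rw [hL]; push_cast; ring
  rw [hRHS, hsplit]
  calc |(measureEntropy (μ.map X) - measureEntropy (μ'.map X')) +
      (measureEntropy (μ.map Y) - measureEntropy (μ'.map Y')) -
      (measureEntropy (μ.map (fun ω => (X ω, Y ω))) -
        measureEntropy (μ'.map (fun ω => (X' ω, Y' ω))))|
      ≤ |(measureEntropy (μ.map X) - measureEntropy (μ'.map X')) +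
        (measureEntropy (μ.map Y) - measureEntropy (μ'.map Y'))| +
        |measureEntropy (μ.map (fun ω => (X ω, Y ω))) -
          measureEntropy (μ'.map (fun ω => (X' ω, Y' ω)))| := abs_sub _ _
    _ ≤ |measureEntropy (μ.map X) - measureEntropy (μ'.map X')| +
        |measureEntropy (μ.map Y) - measureEntropy (μ'.map Y')| +
        |measureEntropy (μ.map (fun ω => (X ω, Y ω))) -
          measureEntropy (μ'.map (fun ω => (X' ω, Y' ω)))| := by
        have := abs_add_le (measureEntropy (μ.map X) - measureEntropy (μ'.map X'))
          (measureEntropy (μ.map Y) - measureEntropy (μ'.map Y'))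
        linarith
    _ ≤ δ * L + δ * L + δ * L := by linarith

end WiretapEquiv
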